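/- Define planar rooted trees inductively: a planar rooted tree is either a leaf, or an internal node carrying an ordered list of at least two planar rooted subtrees; the number of leaves and the number of internal nodes of a tree are defined recursively in the obvious way. For n ≥ 2 and 1 ≤ a ≤ n-1, the set of planar rooted trees with exactly n leaves and exactly a internal nodes is finite, and its cardinality t(n, a) satisfies n · t(n, a) = C(n+a-1, a) · C(n-2, a-1). -/

import Mathlib

/-- A planar rooted tree: either a leaf, or an internal node carrying an ordered list of
at least two planar rooted subtrees (encoded as the first two children together with the
list of the remaining children). -/
inductive PlanarTree : Type where
  | leaf : PlanarTree
  | node : PlanarTree → PlanarTree → List PlanarTree → PlanarTree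

/-- The number of leaves of a planar rooted tree. -/
def PlanarTree.leaves : PlanarTree → ℕ
  | .leaf => 1
  | .node t₁ t₂ rest => t₁.leaves + t₂.leaves + (rest.attach.map fun x => x.1.leaves).sum
decreasing_by
  · simp_wf; omega
  · simp_wf; omega
  · simp_wf; have := List.sizeOf_lt_of_mem x.2; omega

/-- The number of internal nodes of a planar rooted tree. -/
def PlanarTree.inodes : PlanarTree → ℕ
  | .leaf => 0
  | .node t₁ t₂ rest => 1 + t₁.inodes + t₂.inodes + (rest.attach.map fun x => x.1.inodes).sum
decreasing_by
  · simp_wf; omega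
  · simp_wf; omega
  · simp_wf; have := List.sizeOf_lt_of_mem x.2; omega

/-- The number of internal nodes of a planar rooted tree having exactly `k` children. -/
def PlanarTree.arityCount (k : ℕ) : PlanarTree → ℕ
  | .leaf => 0
  | .node t₁ t₂ rest =>
      (if rest.length + 2 = k then 1 else 0) + t₁.arityCount k + t₂.arityCount k +
        (rest.attach.map fun x => x.1.arityCount k).sum
decreasing_by
  · simp_wf; omega
  · simp_wf; omega
  · simp_wf; have := List.sizeOf_lt_of_mem x.2; omega

/-- custom induction principle -/
theorem PlanarTree.my_ind {P : PlanarTree → Prop} (hl : P .leaf)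
    (hn : ∀ t₁ t₂ rest, P t₁ → P t₂ → (∀ t ∈ rest, P t) → P (.node t₁ t₂ rest)) :
    ∀ t, P t := by
  have key : ∀ N t, sizeOf t ≤ N → P t := by
    intro N
    induction N with
    | zero => intro t h; cases t <;> simp at h
    | succ N ih =>
      intro t h
      cases t with
      | leaf => exact hl
      | node t₁ t₂ rest =>
        simp only [PlanarTree.node.sizeOf_spec] at h
        refine hn _ _ _ (ih _ (by omega)) (ih _ (by omega)) ?_
        intro t ht
        have := List.sizeOf_lt_of_mem ht
        exact ih _ (by omega)
  exact fun t => key (sizeOf t) t le_rfl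

def PlanarTree.code : PlanarTree → List ℕ
  | .leaf => [0]
  | .node t₁ t₂ rest =>
      (rest.length + 2) :: (t₁.code ++ t₂.code ++ (rest.attach.map fun x => x.1.code).flatten)
decreasing_by
  · simp_wf; omega
  · simp_wf; omega
  · simp_wf; have := List.sizeOf_lt_of_mem x.2; omega

theorem PlanarTree.code_node (t₁ t₂ : PlanarTree) (rest : List PlanarTree) :
    (PlanarTree.node t₁ t₂ rest).code =
      (rest.length + 2) :: (t₁.code ++ t₂.code ++ (rest.map PlanarTree.code).flatten) := by
  rw [PlanarTree.code, List.attach_map_val]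

theorem PlanarTree.leaves_node (t₁ t₂ : PlanarTree) (rest : List PlanarTree) :
    (PlanarTree.node t₁ t₂ rest).leaves =
      t₁.leaves + t₂.leaves + (rest.map PlanarTree.leaves).sum := by
  rw [PlanarTree.leaves, List.attach_map_val]

theorem PlanarTree.inodes_node (t₁ t₂ : PlanarTree) (rest : List PlanarTree) :
    (PlanarTree.node t₁ t₂ rest).inodes =
      1 + t₁.inodes + t₂.inodes + (rest.map PlanarTree.inodes).sum := by
  rw [PlanarTree.inodes, List.attach_map_val]

theorem PlanarTree.code_length : ∀ t : PlanarTree, t.code.length = t.leaves + t.inodes := by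
  apply PlanarTree.my_ind
  · simp [PlanarTree.code, PlanarTree.leaves, PlanarTree.inodes]
  · intro t₁ t₂ rest h1 h2 hr
    rw [code_node, leaves_node, inodes_node]
    simp only [List.length_cons, List.length_append, List.length_flatten, h1, h2]
    have : (List.map List.length (List.map PlanarTree.code rest)).sum
        = (rest.map PlanarTree.leaves).sum + (rest.map PlanarTree.inodes).sum := by
      induction rest with
      | nil => simp
      | cons x xs ihx =>
        simp only [List.map_cons, List.sum_cons, hr x (by simp),
          ihx (fun t ht => hr t (by simp [ht]))]
        omega
    rw [List.map_map] at this ⊢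
    omega

/-- number of nonzero entries -/
def nzc (w : List ℕ) : ℕ := w.countP (fun x => decide (x ≠ 0))

theorem nzc_cons (x : ℕ) (w : List ℕ) : nzc (x :: w) = nzc w + (if x ≠ 0 then 1 else 0) := by
  simp [nzc, List.countP_cons]

theorem nzc_append (v w : List ℕ) : nzc (v ++ w) = nzc v + nzc w := by
  simp [nzc, List.countP_append]

/-- partial sums dominate the index -/
def Dom (w : List ℕ) : Prop := ∀ i < w.length, i ≤ (w.take i).sum

/-- `OkJ k w` : `w` is (shaped like) a concatenation of `k` valid codes. -/
def OkJ (k : ℕ) (w : List ℕ) : Prop :=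
  w.sum + k = w.length ∧ ∀ i < w.length, i ≤ (w.take i).sum + (k - 1)

def Ok (w : List ℕ) : Prop := OkJ 1 w

theorem ok_iff (w : List ℕ) : Ok w ↔ w.sum + 1 = w.length ∧ Dom w := by
  simp [Ok, OkJ, Dom]

theorem ok_cons {k : ℕ} {body : List ℕ} (hk : 1 ≤ k) (h : OkJ k body) : Ok (k :: body) := by
  obtain ⟨hs, hp⟩ := h
  constructor
  · simp only [List.sum_cons, List.length_cons]; omega
  · intro i hi
    match i with
    | 0 => simp
    | j + 1 =>
      simp only [List.length_cons] at hi
      have := hp j (by omega)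
      simp only [List.take_succ_cons, List.sum_cons]
      omega

theorem okj_append {w v : List ℕ} {k : ℕ} (hk : 1 ≤ k) (hw : Ok w) (hv : OkJ k v) :
    OkJ (k + 1) (w ++ v) := by
  obtain ⟨hws, hwp⟩ := hw
  obtain ⟨hvs, hvp⟩ := hv
  constructor
  · simp only [List.sum_append, List.length_append]; omega
  · intro i hi
    simp only [List.length_append] at hi
    rcases le_or_gt i w.length with hle | hgt
    · rw [List.take_append_of_le_length hle]
      rcases eq_or_lt_of_le hle with rfl | hlt
      · simp only [List.take_length]; omega
      · have := hwp i hlt; omega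
    · have heq : i = w.length + (i - w.length) := by omega
      rw [heq, List.take_add, List.drop_append_of_le_length le_rfl, List.drop_length,
        List.nil_append, List.take_left, List.sum_append]
      have := hvp (i - w.length) (by omega)
      omega

theorem okj_flatten : ∀ ts : List (List ℕ), ts ≠ [] → (∀ w ∈ ts, Ok w) →
    OkJ ts.length ts.flatten := by
  intro ts
  induction ts with
  | nil => simp
  | cons w rest ih =>
    intro _ h
    match rest, ih with
    | [], _ => simpa [Ok] using h w (by simp)
    | r :: rs, ih =>
      have := okj_append (k := (r :: rs).length) (by simp) (h w (by simp))
        (ih (by simp) (fun v hv => h v (by simp [hv])))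
      simpa using this

theorem PlanarTree.code_flatten_eq (t₁ t₂ : PlanarTree) (rest : List PlanarTree) :
    (PlanarTree.node t₁ t₂ rest).code =
      (rest.length + 2) :: ((t₁ :: t₂ :: rest).map PlanarTree.code).flatten := by
  rw [PlanarTree.code_node]
  simp [List.append_assoc]

theorem PlanarTree.code_entries : ∀ t : PlanarTree, ∀ x ∈ t.code, x = 0 ∨ 2 ≤ x := by
  apply PlanarTree.my_ind
  · simp [PlanarTree.code]
  · intro t₁ t₂ rest h1 h2 hr x hx
    rw [PlanarTree.code_flatten_eq] at hx
    simp only [List.mem_cons, List.mem_flatten, List.mem_map] at hx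
    rcases hx with rfl | ⟨l, ⟨t, ht, rfl⟩, hxl⟩
    · omega
    · rcases ht with rfl | rfl | ht
      exacts [h1 x hxl, h2 x hxl, hr t ht x hxl]

theorem PlanarTree.code_nzc : ∀ t : PlanarTree, nzc t.code = t.inodes := by
  apply PlanarTree.my_ind
  · simp [PlanarTree.code, PlanarTree.inodes, nzc]
  · intro t₁ t₂ rest h1 h2 hr
    rw [PlanarTree.code_node, PlanarTree.inodes_node, nzc_cons, nzc_append, nzc_append, h1, h2]
    have : nzc ((rest.map PlanarTree.code).flatten) = (rest.map PlanarTree.inodes).sum := by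
      induction rest with
      | nil => simp [nzc]
      | cons x xs ihx =>
        simp only [List.map_cons, List.flatten_cons, nzc_append, List.sum_cons,
          hr x (by simp), ihx (fun t ht => hr t (by simp [ht]))]
    rw [this]; simp; omega

theorem PlanarTree.code_ok : ∀ t : PlanarTree, Ok t.code := by
  apply PlanarTree.my_ind
  · constructor
    · simp [PlanarTree.code]
    · intro i hi
      simp [PlanarTree.code] at hi
      omega
  · intro t₁ t₂ rest h1 h2 hr
    rw [PlanarTree.code_flatten_eq]
    have hjoin := okj_flatten ((t₁ :: t₂ :: rest).map PlanarTree.code) (by simp)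
      (by
        intro w hw
        simp only [List.mem_map, List.mem_cons] at hw
        obtain ⟨t, ht, rfl⟩ := hw
        rcases ht with rfl | rfl | ht
        exacts [h1, h2, hr t ht])
    simp only [List.length_map, List.length_cons] at hjoin
    have : rest.length + 1 + 1 = rest.length + 2 := by omega
    rw [this] at hjoin
    exact ok_cons (by omega) hjoin

theorem ok_ne_nil {w : List ℕ} (h : Ok w) : w ≠ [] := by
  rintro rfl; have := h.1; simp at this

theorem okj_split {k : ℕ} {w : List ℕ} (hk : 1 ≤ k) (h : OkJ (k + 1) w) :
    ∃ p s, w = p ++ s ∧ Ok p ∧ OkJ k s := by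
  obtain ⟨hs, hp⟩ := h
  have hex : ∃ i, (w.take i).sum < i := ⟨w.length, by rw [List.take_length]; omega⟩
  set i0 := Nat.find hex with hi0def
  have hi0 : (w.take i0).sum < i0 := Nat.find_spec hex
  have hmin : ∀ j < i0, ¬ (w.take j).sum < j := fun j hj => Nat.find_min hex hj
  have hi0pos : 1 ≤ i0 := by
    by_contra hc
    interval_cases i0
    simp at hi0
  have hi0le : i0 ≤ w.length := Nat.find_min' hex (by rw [List.take_length]; omega)
  have hmono : (w.take (i0 - 1)).sum ≤ (w.take i0).sum := by
    have key : (w.take ((i0 - 1) + 1)).sum = (w.take (i0 - 1)).sum + ((w.drop (i0 - 1)).take 1).sum := by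
      rw [List.take_add, List.sum_append]
    rw [(by omega : i0 - 1 + 1 = i0)] at key
    omega
  have hprev : ¬ (w.take (i0 - 1)).sum < i0 - 1 := hmin _ (by omega)
  have hsum : (w.take i0).sum + 1 = i0 := by omega
  refine ⟨w.take i0, w.drop i0, (List.take_append_drop i0 w).symm, ?_, ?_⟩
  · constructor
    · rw [List.length_take, min_eq_left hi0le]; omega
    · intro i hi
      rw [List.length_take, min_eq_left hi0le] at hi
      rw [List.take_take, min_eq_left (le_of_lt hi)]
      have := hmin i hi
      omega
  · have hlen : (w.drop i0).length = w.length - i0 := List.length_drop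
    have hsplit : w.sum = (w.take i0).sum + (w.drop i0).sum := by
      conv_lhs => rw [← List.take_append_drop i0 w]
      rw [List.sum_append]
    constructor
    · omega
    · intro j hj
      have hij : i0 + j < w.length := by omega
      have := hp (i0 + j) hij
      rw [List.take_add, List.sum_append] at this
      omega

theorem ok_unique_split {p s p' s' : List ℕ} (h : p ++ s = p' ++ s')
    (hp : Ok p) (hp' : Ok p') : p = p' ∧ s = s' := by
  have key : ∀ {a b a' b' : List ℕ}, a ++ b = a' ++ b' → Ok a → Ok a' →
      a.length ≤ a'.length → a = a' := by
    intro a b a' b' hab ha ha' hle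
    have heq : a = a'.take a.length := by
      have h0 := congrArg (List.take a.length) hab
      rwa [List.take_left, List.take_append_of_le_length hle] at h0
    rcases eq_or_lt_of_le hle with heql | hlt
    · rw [heq, heql, List.take_length]
    · exfalso
      have h1 := ha'.2 a.length hlt
      have h2 : (a'.take a.length).sum = a.sum := by rw [← heq]
      have h3 := ha.1
      have h4 : a.length ≥ 1 := by
        have := ok_ne_nil ha
        cases a with | nil => simp at this | cons x xs => simp
      omega
  have hpp : p = p' := by
    rcases le_total p.length p'.length with hle | hle
    · exact key h hp hp' hle
    · exact (key h.symm hp' hp hle).symm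
  subst hpp
  exact ⟨rfl, List.append_cancel_left h⟩

theorem flatten_inj : ∀ ts ts' : List (List ℕ), (∀ w ∈ ts, Ok w) → (∀ w ∈ ts', Ok w) →
    ts.length = ts'.length → ts.flatten = ts'.flatten → ts = ts' := by
  intro ts
  induction ts with
  | nil => intro ts' _ _ hlen _; cases ts' with
    | nil => rfl
    | cons _ _ => simp at hlen
  | cons w rest ih =>
    intro ts' hok hok' hlen hfl
    cases ts' with
    | nil => simp at hlen
    | cons w' rest' =>
      simp only [List.flatten_cons] at hfl
      obtain ⟨rfl, hrest⟩ := ok_unique_split hfl (hok w (by simp)) (hok' w' (by simp))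
      have := ih rest' (fun v hv => hok v (by simp [hv])) (fun v hv => hok' v (by simp [hv]))
        (by simpa using hlen) hrest
      rw [this]

theorem map_inj_of_mem {α β : Type*} (f : α → β) : ∀ (l l' : List α), l.map f = l'.map f →
    (∀ x ∈ l, ∀ y, f x = f y → x = y) → l = l' := by
  intro l
  induction l with
  | nil => intro l' h _; cases l' with
    | nil => rfl
    | cons _ _ => simp at h
  | cons x xs ih =>
    intro l' h hinj
    cases l' with
    | nil => simp at h
    | cons y ys =>
      simp only [List.map_cons, List.cons.injEq] at h
      rw [hinj x (by simp) y h.1, ih ys h.2 (fun z hz => hinj z (by simp [hz]))]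

theorem PlanarTree.code_inj : ∀ t t' : PlanarTree, t.code = t'.code → t = t' := by
  apply PlanarTree.my_ind (P := fun t => ∀ t', t.code = t'.code → t = t')
  · intro t' h
    cases t' with
    | leaf => rfl
    | node t₁ t₂ rest =>
      rw [PlanarTree.code_node] at h
      simp [PlanarTree.code] at h
  · intro t₁ t₂ rest h1 h2 hr t' h
    cases t' with
    | leaf =>
      rw [PlanarTree.code_node] at h
      simp [PlanarTree.code] at h
    | node t₁' t₂' rest' =>
      rw [PlanarTree.code_flatten_eq, PlanarTree.code_flatten_eq] at h
      simp only [List.cons.injEq] at h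
      obtain ⟨hhead, htail⟩ := h
      have hcodes := flatten_inj _ _
        (by rintro w hw; simp only [List.mem_map] at hw; obtain ⟨t, _, rfl⟩ := hw
            exact PlanarTree.code_ok t)
        (by rintro w hw; simp only [List.mem_map] at hw; obtain ⟨t, _, rfl⟩ := hw
            exact PlanarTree.code_ok t)
        (by simp; omega) htail
      have hlists := map_inj_of_mem PlanarTree.code _ _ hcodes
        (by
          intro x hx y hxy
          simp only [List.mem_cons] at hx
          rcases hx with rfl | rfl | hx
          exacts [h1 y hxy, h2 y hxy, hr x hx y hxy])
      rw [List.cons.injEq, List.cons.injEq] at hlists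
      obtain ⟨rfl, rfl, rfl⟩ := hlists
      rfl

theorem decodeJ (N : ℕ)
    (hP : ∀ v : List ℕ, v.length ≤ N → (∀ x ∈ v, x = 0 ∨ 2 ≤ x) → Ok v →
      ∃ t : PlanarTree, t.code = v) :
    ∀ k w, 1 ≤ k → w.length ≤ N → (∀ x ∈ w, x = 0 ∨ 2 ≤ x) → OkJ k w →
      ∃ ts : List PlanarTree, ts.length = k ∧ (ts.map PlanarTree.code).flatten = w := by
  intro k
  induction k with
  | zero => intro w hk; omega
  | succ k ih =>
    intro w _ hlen hent hok
    rcases Nat.eq_zero_or_pos k with rfl | hkpos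
    · obtain ⟨t, ht⟩ := hP w hlen hent hok
      exact ⟨[t], by simp [ht]⟩
    · obtain ⟨p, s, rfl, hp, hs⟩ := okj_split hkpos hok
      obtain ⟨t, ht⟩ := hP p (by simp at hlen ⊢; omega)
        (fun x hx => hent x (by simp [hx])) hp
      obtain ⟨ts, hts, hfl⟩ := ih s hkpos (by simp at hlen ⊢; omega)
        (fun x hx => hent x (by simp [hx])) hs
      exact ⟨t :: ts, by simp [hts], by simp [ht, hfl]⟩

theorem decode : ∀ w : List ℕ, (∀ x ∈ w, x = 0 ∨ 2 ≤ x) → Ok w →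
    ∃ t : PlanarTree, t.code = w := by
  have key : ∀ N, ∀ w : List ℕ, w.length ≤ N → (∀ x ∈ w, x = 0 ∨ 2 ≤ x) → Ok w →
      ∃ t : PlanarTree, t.code = w := by
    intro N
    induction N with
    | zero =>
      intro w hlen _ hok
      exfalso
      have := hok.1
      have : w.length = 0 := by omega
      omega
    | succ N ih =>
      intro w hlen hent hok
      match w with
      | [] => exact absurd rfl (ok_ne_nil hok)
      | x :: body =>
        rcases hent x (by simp) with rfl | hx2
        · match body with
          | [] => exact ⟨.leaf, by simp [PlanarTree.code]⟩
          | y :: rest =>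
            exfalso
            have := hok.2 1 (by simp)
            simp at this
        · have hbody : OkJ x body := by
            obtain ⟨hs, hp⟩ := hok
            simp only [List.sum_cons, List.length_cons] at hs
            constructor
            · omega
            · intro j hj
              have := hp (j + 1) (by simp; omega)
              simp only [List.take_succ_cons, List.sum_cons] at this
              omega
          obtain ⟨ts, hts, hfl⟩ := decodeJ N ih x body (by omega)
            (by simp at hlen; omega) (fun z hz => hent z (by simp [hz])) hbody
          obtain ⟨t₁, t₂, rest, rfl⟩ : ∃ t₁ t₂ rest, ts = t₁ :: t₂ :: rest := by
            match ts with
            | [] => simp at hts; omega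
            | [t] => simp at hts; omega
            | t₁ :: t₂ :: rest => exact ⟨_, _, _, rfl⟩
          refine ⟨.node t₁ t₂ rest, ?_⟩
          rw [PlanarTree.code_flatten_eq, hfl]
          simp only [List.length_cons] at hts
          congr 1
  exact fun w => key w.length w le_rfl

theorem sum_take_le (w : List ℕ) (i : ℕ) : (w.take i).sum ≤ w.sum := by
  have : w.sum = (w.take i).sum + (w.drop i).sum := by
    rw [← List.sum_append, List.take_append_drop]
  omega

theorem sum_take_mono (w : List ℕ) {i i' : ℕ} (h : i ≤ i') : (w.take i).sum ≤ (w.take i').sum := by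
  have heq : w.take i = (w.take i').take i := by rw [List.take_take, min_eq_left h]
  rw [heq]
  exact sum_take_le _ _

theorem rot_sum_low {w : List ℕ} {j i : ℕ} (hj : j ≤ w.length) (hi : i ≤ w.length - j) :
    ((w.rotate j).take i).sum + (w.take j).sum = (w.take (j + i)).sum := by
  rw [List.rotate_eq_drop_append_take hj,
    List.take_append_of_le_length (by rw [List.length_drop]; exact hi),
    List.take_add, List.sum_append]
  omega

theorem rot_sum_high {w : List ℕ} {j i : ℕ} (hj : j ≤ w.length) (h1 : w.length - j ≤ i)
    (h2 : i ≤ w.length) :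
    ((w.rotate j).take i).sum + (w.take j).sum = w.sum + (w.take (i - (w.length - j))).sum := by
  rw [List.rotate_eq_drop_append_take hj, List.take_append,
    List.take_of_length_le (by rw [List.length_drop]; exact h1), List.length_drop,
    List.take_take, min_eq_left (by omega), List.sum_append]
  have : (w.take j).sum + (w.drop j).sum = w.sum := by
    rw [← List.sum_append, List.take_append_drop]
  omega

theorem cycle_exists_unique (w : List ℕ) (hs : w.sum + 1 = w.length) :
    ∃! j, j < w.length ∧ Dom (w.rotate j) := by
  set m := w.length with hm
  have hm1 : 1 ≤ m := by omega
  set f : ℕ → ℤ := fun i => ((w.take i).sum : ℤ) - i with hf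
  have hf0 : f 0 = 0 := by simp [hf]
  have hfm : f m = -1 := by
    show ((w.take m).sum : ℤ) - m = -1
    rw [hm, List.take_length]
    omega
  have hQ : ∃ j, j ≤ m ∧ ∀ k ≤ m, f j ≤ f k := by
    obtain ⟨j0, hj0mem, hj0min⟩ := Finset.exists_min_image (Finset.range (m + 1)) f
      ⟨0, by simp⟩
    have := Finset.mem_range.1 hj0mem
    exact ⟨j0, by omega, fun k hk => hj0min k (by simp; omega)⟩
  set j1 := Nat.find hQ with hj1def
  have hj1le : j1 ≤ m := (Nat.find_spec hQ).1
  have hj1min : ∀ k ≤ m, f j1 ≤ f k := (Nat.find_spec hQ).2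
  have hj1least : ∀ t < j1, f j1 < f t := by
    intro t ht
    have hnQ : ¬ (t ≤ m ∧ ∀ k ≤ m, f t ≤ f k) := Nat.find_min hQ ht
    push_neg at hnQ
    obtain ⟨k, hk, hfk⟩ := hnQ (by omega)
    exact lt_of_le_of_lt (hj1min k hk) hfk
  have hj1pos : 1 ≤ j1 := by
    rcases Nat.eq_zero_or_pos j1 with h0 | h; swap; · exact h
    exfalso
    have h1 := hj1min m le_rfl
    rw [h0, hf0, hfm] at h1
    omega
  set j := if j1 = m then 0 else j1 with hjdef
  have hjlt : j < m := by
    rw [hjdef]; split <;> omega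
  have hjdom : Dom (w.rotate j) := by
    intro i hi
    rw [List.length_rotate, ← hm] at hi
    rcases eq_or_ne j1 m with hcase | hcase
    · -- j = 0 : w itself dominating
      have hj0 : j = 0 := by rw [hjdef, if_pos hcase]
      rw [hj0, List.rotate_zero]
      have := hj1least i (by omega)
      rw [hcase, hfm] at this
      simp only [hf] at this
      omega
    · have hj0 : j = j1 := by rw [hjdef, if_neg hcase]
      rw [hj0]
      have hj1lt : j1 < m := by omega
      rcases le_or_gt i (m - j1) with hil | hih
      · have hlow := rot_sum_low (w := w) (j := j1) (i := i) (by omega) (by omega)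
        have hmin := hj1min (j1 + i) (by omega)
        simp only [hf] at hmin
        omega
      · have hhigh := rot_sum_high (w := w) (j := j1) (i := i) (by omega) (by omega) (by omega)
        set t := i - (m - j1) with htdef
        have ht1 : 1 ≤ t := by omega
        have ht2 : t < j1 := by omega
        have := hj1least t ht2
        simp only [hf] at this
        omega
  refine ⟨j, ⟨hjlt, hjdom⟩, ?_⟩
  rintro j' ⟨hj'lt, hdom'⟩
  have hdom'' : ∀ i < m, i ≤ ((w.rotate j').take i).sum := by
    intro i hi
    exact hdom' i (by rw [List.length_rotate]; omega)
  rcases Nat.eq_zero_or_pos j' with rfl | hj'pos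
  · -- w itself dominating ⇒ j1 = m ⇒ j = 0
    have hwdom : ∀ i < m, (0 : ℤ) ≤ f i := by
      intro i hi
      have := hdom'' i hi
      rw [List.rotate_zero] at this
      simp only [hf]
      omega
    have : j1 = m := by
      by_contra hc
      have h1 := hj1min m le_rfl
      have h2 := hwdom j1 (by omega)
      rw [hfm] at h1
      omega
    rw [hjdef, if_pos this]
  · -- j' ≥ 1
    have ha : ∀ k, j' ≤ k → k ≤ m → f j' ≤ f k := by
      intro k hk1 hk2
      rcases eq_or_lt_of_le hk1 with rfl | hlt
      · exact le_rfl
      · have hi : k - j' < m := by omega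
        have := hdom'' (k - j') hi
        have hlow := rot_sum_low (w := w) (j := j') (i := k - j') (by omega) (by omega)
        rw [(by omega : j' + (k - j') = k)] at hlow
        simp only [hf]
        omega
    have hb : f j' ≤ -1 := by
      have := ha m hj'lt.le le_rfl
      rw [hfm] at this
      exact this
    have hc : ∀ t, 1 ≤ t → t < j' → f j' < f t := by
      intro t ht1 ht2
      have hi1 : m - j' < t + (m - j') := by omega
      have hi2 : t + (m - j') < m := by omega
      have := hdom'' (t + (m - j')) hi2
      have hhigh := rot_sum_high (w := w) (j := j') (i := t + (m - j')) (by omega) (by omega)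
        (by omega)
      rw [(by omega : t + (m - j') - (m - j') = t)] at hhigh
      simp only [hf]
      omega
    have hQ' : j' ≤ m ∧ ∀ k ≤ m, f j' ≤ f k := by
      refine ⟨by omega, fun k hk => ?_⟩
      rcases Nat.eq_zero_or_pos k with rfl | hkpos
      · rw [hf0]; omega
      rcases lt_or_ge k j' with hlt | hge
      · exact (hc k hkpos hlt).le
      · exact ha k hge hk
    have hj1le' : j1 ≤ j' := Nat.find_min' hQ hQ'
    have : j1 = j' := by
      rcases eq_or_lt_of_le hj1le' with h | h
      · exact h
      · exfalso
        have h1 := hc j1 hj1pos h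
        have h2 := hj1min j' (by omega)
        omega
    rw [hjdef, if_neg (by omega)]
    omega

theorem two_nzc_le_sum : ∀ v : List ℕ, (∀ x ∈ v, x = 0 ∨ 2 ≤ x) → 2 * nzc v ≤ v.sum := by
  intro v
  induction v with
  | nil => intro _; simp [nzc]
  | cons y ys ih =>
    intro h
    have hys := ih (fun z hz => h z (by simp [hz]))
    rw [nzc_cons]
    simp only [List.sum_cons]
    rcases h y (by simp) with rfl | hy2
    · simp only [ne_eq, not_true_eq_false, if_false]
      omega
    · rw [if_pos (by omega)]
      omega

/-- Finset of lists of length `m` whose entries are `0` or `≥ 2`, with `a` nonzero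
entries, and sum `2*a + e`. -/
def EW : ℕ → ℕ → ℕ → Finset (List ℕ)
  | 0, a, e => if a = 0 ∧ e = 0 then {[]} else ∅
  | m + 1, 0, e => (EW m 0 e).image (List.cons 0)
  | m + 1, a + 1, e =>
      (EW m (a + 1) e).image (List.cons 0) ∪
        (Finset.range (e + 1)).biUnion fun d => (EW m a (e - d)).image (List.cons (d + 2))

theorem mem_EW : ∀ (m a e : ℕ) (w : List ℕ), w ∈ EW m a e ↔
    w.length = m ∧ (∀ x ∈ w, x = 0 ∨ 2 ≤ x) ∧ nzc w = a ∧ w.sum = 2 * a + e := by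
  intro m
  induction m with
  | zero =>
    intro a e w
    rw [EW]
    constructor
    · intro hw
      split at hw
      · next h => simp only [Finset.mem_singleton] at hw; subst hw; simp [nzc]; omega
      · simp at hw
    · intro ⟨h1, _, h3, h4⟩
      have : w = [] := List.eq_nil_of_length_eq_zero h1
      subst this
      simp [nzc] at h3 h4
      split
      · simp
      · next h => exfalso; apply h; omega
  | succ m ih =>
    intro a e w
    match a with
    | 0 =>
      rw [EW]
      simp only [Finset.mem_image, ih]
      constructor
      · rintro ⟨v, ⟨hv1, hv2, hv3, hv4⟩, rfl⟩
        refine ⟨by simp [hv1], ?_, by simp [nzc_cons, hv3], by simp [hv4]⟩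
        intro x hx
        rcases List.mem_cons.1 hx with rfl | hx
        · left; rfl
        · exact hv2 x hx
      · rintro ⟨h1, h2, h3, h4⟩
        match w with
        | [] => simp at h1
        | x :: v =>
          have hx0 : x = 0 := by
            rcases h2 x (by simp) with rfl | hx2
            · rfl
            · exfalso
              rw [nzc_cons, if_pos (by omega)] at h3
              omega
          subst hx0
          refine ⟨v, ⟨by simpa using h1, fun y hy => h2 y (by simp [hy]), ?_, ?_⟩, rfl⟩
          · rw [nzc_cons, if_neg (by omega : ¬ ((0:ℕ) ≠ 0))] at h3; omega
          · simpa using h4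
    | a + 1 =>
      rw [EW]
      simp only [Finset.mem_union, Finset.mem_biUnion, Finset.mem_image, Finset.mem_range, ih]
      constructor
      · rintro (⟨v, ⟨hv1, hv2, hv3, hv4⟩, rfl⟩ | ⟨d, hd, v, ⟨hv1, hv2, hv3, hv4⟩, rfl⟩)
        · refine ⟨by simp [hv1], ?_, ?_, by simp [hv4]⟩
          · intro x hx
            rcases List.mem_cons.1 hx with rfl | hx
            · left; rfl
            · exact hv2 x hx
          · rw [nzc_cons, if_neg (by omega : ¬ ((0:ℕ) ≠ 0))]; omega
        · refine ⟨by simp [hv1], ?_, ?_, ?_⟩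
          · intro x hx
            rcases List.mem_cons.1 hx with rfl | hx
            · right; omega
            · exact hv2 x hx
          · rw [nzc_cons, if_pos (by omega), hv3]
          · simp only [List.sum_cons, hv4]; omega
      · rintro ⟨h1, h2, h3, h4⟩
        match w with
        | [] => simp at h1
        | x :: v =>
          have hv2 : ∀ y ∈ v, y = 0 ∨ 2 ≤ y := fun y hy => h2 y (by simp [hy])
          rcases h2 x (by simp) with rfl | hx2
          · left
            refine ⟨v, ⟨by simpa using h1, hv2, ?_, ?_⟩, rfl⟩
            · rw [nzc_cons, if_neg (by omega : ¬ ((0:ℕ) ≠ 0))] at h3; omega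
            · simpa using h4
          · right
            have hnz : nzc v = a := by
              rw [nzc_cons, if_pos (by omega)] at h3
              omega
            have hvge : 2 * a ≤ v.sum := by
              have := two_nzc_le_sum v hv2
              omega
            simp only [List.sum_cons] at h4
            refine ⟨x - 2, by omega, v, ⟨by simpa using h1, hv2, hnz, by omega⟩, ?_⟩
            have : x - 2 + 2 = x := by omega
            rw [this]

theorem hockey (r : ℕ) : ∀ e, (∑ j ∈ Finset.range (e + 1), (j + r).choose r)
    = (e + r + 1).choose (r + 1) := by
  intro e
  induction e with
  | zero => simp
  | succ e ihe =>
    rw [Finset.sum_range_succ, ihe]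
    have : e + 1 + r + 1 = (e + r + 1) + 1 := by omega
    rw [this, Nat.choose_succ_succ (e + r + 1) r]
    have h2 : e + 1 + r = e + r + 1 := by omega
    rw [h2]
    simp only [Nat.succ_eq_add_one]
    omega

theorem card_EW0 : ∀ m e, (EW m 0 e).card = if e = 0 then 1 else 0 := by
  intro m
  induction m with
  | zero =>
    intro e
    rw [EW]
    split
    · next h => rw [if_pos h.2]; simp
    · next h => rw [if_neg (fun he => h ⟨rfl, he⟩)]; simp
  | succ m ih =>
    intro e
    rw [EW, Finset.card_image_of_injective _ (List.cons_injective), ih]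

theorem card_EW : ∀ m a e, (EW m (a + 1) e).card = m.choose (a + 1) * (e + a).choose a := by
  intro m
  induction m with
  | zero =>
    intro a e
    rw [EW, if_neg (by simp)]
    simp
  | succ m ih =>
    intro a e
    rw [EW]
    have hdisj : Disjoint ((EW m (a + 1) e).image (List.cons 0))
        ((Finset.range (e + 1)).biUnion fun d => (EW m a (e - d)).image (List.cons (d + 2))) := by
      rw [Finset.disjoint_left]
      rintro w hw1 hw2
      simp only [Finset.mem_image] at hw1
      simp only [Finset.mem_biUnion, Finset.mem_image] at hw2
      obtain ⟨v, _, rfl⟩ := hw1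
      obtain ⟨d, _, v', _, heq⟩ := hw2
      simp only [List.cons.injEq] at heq
      omega
    rw [Finset.card_union_of_disjoint hdisj,
      Finset.card_image_of_injective _ (List.cons_injective),
      Finset.card_biUnion (by
        intro d1 h1 d2 h2 hne
        rw [Function.onFun, Finset.disjoint_left]
        rintro w hw1 hw2
        simp only [Finset.mem_image] at hw1 hw2
        obtain ⟨v, _, rfl⟩ := hw1
        obtain ⟨v', _, heq⟩ := hw2
        simp only [List.cons.injEq] at heq
        omega)]
    simp only [Finset.card_image_of_injective _ (List.cons_injective)]
    match a with
    | 0 =>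
      have hsum : (∑ d ∈ Finset.range (e + 1), (EW m 0 (e - d)).card) = 1 := by
        have : ∀ d ∈ Finset.range (e + 1), (EW m 0 (e - d)).card
            = if d = e then 1 else 0 := by
          intro d hd
          simp only [Finset.mem_range] at hd
          rw [card_EW0]
          by_cases h : d = e
          · rw [if_pos (by omega), if_pos h]
          · rw [if_neg (by omega), if_neg h]
        rw [Finset.sum_congr rfl this, Finset.sum_ite_eq' (Finset.range (e + 1)) e]
        simp
      rw [hsum, ih 0 e]
      simp [Nat.choose_one_right]
    | a + 1 =>
      have hsum : (∑ d ∈ Finset.range (e + 1), (EW m (a + 1) (e - d)).card)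
          = m.choose (a + 1) * (e + a + 1).choose (a + 1) := by
        have h1 : ∀ d ∈ Finset.range (e + 1), (EW m (a + 1) (e - d)).card
            = m.choose (a + 1) * ((e - d) + a).choose a := fun d _ => ih (a) (e - d)
        rw [Finset.sum_congr rfl h1, ← Finset.mul_sum]
        congr 1
        have hre : (∑ d ∈ Finset.range (e + 1), ((e - d) + a).choose a)
            = ∑ j ∈ Finset.range (e + 1), (j + a).choose a := by
          have := Finset.sum_range_reflect (fun j => (j + a).choose a) (e + 1)
          rw [← this]
          apply Finset.sum_congr rfl
          intro d hd
          simp only [Finset.mem_range] at hd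
          have h3 : e + 1 - 1 - d = e - d := by omega
          rw [h3]
        rw [hre, hockey]
      rw [hsum, ih (a + 1) e]
      have hps : (m + 1).choose (a + 1 + 1) = m.choose (a + 1) + m.choose (a + 1 + 1) :=
        Nat.choose_succ_succ m (a + 1)
      have : e + (a + 1) = e + a + 1 := by omega
      rw [this, hps]
      ring

theorem nzc_rotate (w : List ℕ) (i : ℕ) : nzc (w.rotate i) = nzc w :=
  (List.rotate_perm w i).countP_eq _


/-- **Refined Schröder counting.** For `n ≥ 2` and `1 ≤ a ≤ n-1`, the set of planar
rooted trees with exactly `n` leaves and exactly `a` internal nodes is finite, and its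
cardinality `t(n,a)` satisfies `n · t(n,a) = C(n+a-1, a) · C(n-2, a-1)`. -/
theorem schroder_refined_identity (n a : ℕ) (hn : 2 ≤ n) (ha1 : 1 ≤ a) (ha2 : a ≤ n - 1) :
    {t : PlanarTree | t.leaves = n ∧ t.inodes = a}.Finite ∧
      n * Nat.card {t : PlanarTree | t.leaves = n ∧ t.inodes = a} =
        Nat.choose (n + a - 1) a * Nat.choose (n - 2) (a - 1) := by
  have han : a + 1 ≤ n := by omega
  set m := n + a with hmdef
  set e := n - a - 1 with hedef
  set Tset := {t : PlanarTree | t.leaves = n ∧ t.inodes = a} with hTdef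
  set Wset := (↑(EW m a e) : Set (List ℕ)) with hWdef
  set Dset := {w ∈ Wset | Dom w} with hDdef
  have hmemW : ∀ w : List ℕ, w ∈ Wset ↔ w.length = m ∧ (∀ x ∈ w, x = 0 ∨ 2 ≤ x) ∧
      nzc w = a ∧ w.sum = 2 * a + e := by
    intro w
    rw [hWdef, Finset.mem_coe, mem_EW]
  -- the coding bijection
  have hbij : Set.BijOn PlanarTree.code Tset Dset := by
    refine ⟨?_, fun t _ t' _ h => PlanarTree.code_inj t t' h, ?_⟩
    · rintro t ⟨htl, hti⟩
      have hok := PlanarTree.code_ok t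
      rw [ok_iff] at hok
      have hlen : t.code.length = m := by rw [PlanarTree.code_length, htl, hti]
      refine ⟨(hmemW t.code).2 ⟨hlen, PlanarTree.code_entries t, ?_, ?_⟩, hok.2⟩
      · rw [PlanarTree.code_nzc, hti]
      · have := hok.1; rw [hlen] at this; omega
    · rintro w ⟨hw, hdom⟩
      rw [hmemW] at hw
      obtain ⟨h1, h2, h3, h4⟩ := hw
      have hok : Ok w := by
        rw [ok_iff]
        exact ⟨by omega, hdom⟩
      obtain ⟨t, ht⟩ := decode w h2 hok
      have hlen := PlanarTree.code_length t
      have hnz := PlanarTree.code_nzc t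
      rw [ht] at hlen hnz
      exact ⟨t, ⟨by omega, by omega⟩, ht⟩
  -- finiteness
  have hWfin : Wset.Finite := (EW m a e).finite_toSet
  have hDfin : Dset.Finite := hWfin.subset (fun w hw => hw.1)
  have hTfin : Tset.Finite := by
    apply Set.Finite.of_finite_image _ hbij.injOn
    rw [hbij.image_eq]
    exact hDfin
  refine ⟨hTfin, ?_⟩
  -- card T = card D
  have hTD : Nat.card Tset = Nat.card Dset := by
    rw [Nat.card_coe_set_eq, Nat.card_coe_set_eq, ← hbij.image_eq,
      Set.ncard_image_of_injOn hbij.injOn]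
  -- the rotation bijection
  have hsumlen : ∀ w ∈ Dset, w.length = m ∧ w.sum + 1 = m := by
    rintro w ⟨hw, _⟩
    rw [hmemW] at hw
    refine ⟨hw.1, ?_⟩
    have := hw.2.2.2
    omega
  have hrotbij : Set.BijOn (fun p : List ℕ × ℕ => p.1.rotate p.2)
      (Dset ×ˢ Set.Iio m) Wset := by
    refine ⟨?_, ?_, ?_⟩
    · rintro ⟨w, i⟩ ⟨hw, _⟩
      have hperm := List.rotate_perm w i
      rw [hmemW]
      obtain ⟨hw1, hw2, hw3, hw4⟩ := (hmemW w).1 hw.1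
      exact ⟨by rw [List.length_rotate, hw1], fun x hx => hw2 x (hperm.subset hx),
        by rw [nzc_rotate, hw3], by rw [hperm.sum_eq, hw4]⟩
    · rintro ⟨w, i⟩ ⟨hw, hi⟩ ⟨w', i'⟩ ⟨hw', hi'⟩ hrot
      simp only [Set.mem_Iio] at hi hi'
      simp only at hrot
      obtain ⟨hwlen, hwsum⟩ := hsumlen w hw
      obtain ⟨hwlen', hwsum'⟩ := hsumlen w' hw'
      -- the common rotation
      set u := w.rotate i with hudef
      have huu' : u = w'.rotate i' := hrot
      have hulen : u.length = m := by rw [hudef, List.length_rotate, hwlen]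
      have husum : u.sum + 1 = u.length := by
        rw [hudef, (List.rotate_perm w i).sum_eq, List.length_rotate]
        omega
      obtain ⟨j0, hj0, huniq⟩ := cycle_exists_unique u husum
      rw [hulen] at huniq
      have hback : ∀ (v : List ℕ) (k : ℕ), v.length = m → k < m → v.rotate k = u →
          (if k = 0 then 0 else m - k) < m ∧ u.rotate (if k = 0 then 0 else m - k) = v := by
        intro v k hvlen hk hvu
        rcases Nat.eq_zero_or_pos k with rfl | hkpos
        · rw [if_pos rfl]
          constructor
          · omega
          · rw [List.rotate_zero] at hvu ⊢; exact hvu.symm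
        · rw [if_neg (by omega)]
          refine ⟨by omega, ?_⟩
          rw [← hvu, List.rotate_rotate, (by omega : k + (m - k) = m), ← hvlen,
            List.rotate_length]
      obtain ⟨hj1lt, hj1rot⟩ := hback w i hwlen hi rfl
      obtain ⟨hj2lt, hj2rot⟩ := hback w' i' hwlen' hi' huu'.symm
      have hd1 : Dom (u.rotate (if i = 0 then 0 else m - i)) := by rw [hj1rot]; exact hw.2
      have hd2 : Dom (u.rotate (if i' = 0 then 0 else m - i')) := by rw [hj2rot]; exact hw'.2
      have heqj : (if i = 0 then 0 else m - i) = (if i' = 0 then 0 else m - i') := by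
        rw [huniq _ ⟨hj1lt, hd1⟩, huniq _ ⟨hj2lt, hd2⟩]
      have hww' : w = w' := by rw [← hj1rot, heqj, hj2rot]
      -- now the indices
      have hii' : i = i' := by
        by_contra hne
        subst hww'
        -- w.rotate i = w.rotate i' with i ≠ i', both < m
        have hrr : w.rotate i = w.rotate i' := huu'
        have key : ∀ k k' : ℕ, k < k' → k' < m → w.rotate k = w.rotate k' → False := by
          intro k k' hkk' hk'm hr
          have h0 : w.rotate (k + (m - k')) = w := by
            have hcon := congrArg (fun l => List.rotate l (m - k')) hr
            simp only [List.rotate_rotate] at hcon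
            rw [(by omega : k' + (m - k') = m)] at hcon
            have h2 : w.rotate m = w := by rw [← hwlen, List.rotate_length]
            rw [hcon, h2]
          obtain ⟨jw, hjw, huniqw⟩ := cycle_exists_unique w (by omega)
          rw [hwlen] at huniqw
          have e1 : (0 : ℕ) = jw := huniqw 0 ⟨by omega, by rw [List.rotate_zero]; exact hw.2⟩
          have e2 : k + (m - k') = jw := huniqw (k + (m - k'))
            ⟨by omega, by rw [h0]; exact hw.2⟩
          omega
        rcases lt_or_gt_of_ne hne with h | h
        · exact key i i' h hi' hrr
        · exact key i' i h hi hrr.symm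
      rw [hww', hii']
    · rintro u hu
      obtain ⟨hu1, hu2, hu3, hu4⟩ := (hmemW u).1 hu
      have husum : u.sum + 1 = u.length := by omega
      obtain ⟨j, ⟨hjlt, hjdom⟩, _⟩ := cycle_exists_unique u husum
      rw [hu1] at hjlt
      set w := u.rotate j with hwdef
      have hperm := List.rotate_perm u j
      have hwD : w ∈ Dset := by
        refine ⟨(hmemW w).2 ⟨by rw [hwdef, List.length_rotate, hu1],
          fun x hx => hu2 x (hperm.subset hx),
          by rw [hwdef, nzc_rotate, hu3],
          by rw [hwdef, hperm.sum_eq, hu4]⟩, hjdom⟩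
      refine ⟨⟨w, if j = 0 then 0 else m - j⟩, ⟨hwD, ?_⟩, ?_⟩
      · simp only [Set.mem_Iio]
        split <;> omega
      · simp only
        rcases Nat.eq_zero_or_pos j with rfl | hjpos
        · rw [if_pos rfl, hwdef, List.rotate_zero, List.rotate_zero]
        · rw [if_neg (by omega), hwdef, List.rotate_rotate,
            (by omega : j + (m - j) = m), ← hu1, List.rotate_length]
  -- card W = m * card D
  have hWcard : Nat.card Wset = Nat.card Dset * m := by
    rw [Nat.card_coe_set_eq, ← hrotbij.image_eq,
      Set.ncard_image_of_injOn hrotbij.injOn, ← Nat.card_coe_set_eq,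
      Nat.card_congr (Equiv.Set.prod _ _), Nat.card_prod]
    congr 1
    rw [← Finset.coe_range, Nat.card_coe_set_eq, Set.ncard_coe_finset,
      Finset.card_range]
  -- card W explicitly
  have hWval : Nat.card Wset = m.choose a * (n - 2).choose (a - 1) := by
    rw [hWdef, Nat.card_coe_set_eq, Set.ncard_coe_finset]
    have hc := card_EW m (a - 1) e
    rw [(show a - 1 + 1 = a by omega), (show e + (a - 1) = n - 2 by omega)] at hc
    exact hc
  -- final arithmetic
  rw [hTD]
  set T := Nat.card Dset with hT
  have hmain : T * m = m.choose a * (n - 2).choose (a - 1) := by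
    rw [← hWcard, hWval]
  have hchoose : n * m.choose a = m * (n + a - 1).choose a := by
    have h1 : m.choose n = m.choose a := by
      rw [(show n = m - a by omega)]
      exact Nat.choose_symm (by omega)
    have h2 : (n + a - 1).choose (n - 1) = (n + a - 1).choose a := by
      rw [(show n - 1 = n + a - 1 - a by omega)]
      exact Nat.choose_symm (by omega)
    have h3 := Nat.add_one_mul_choose_eq (n + a - 1) (n - 1)
    rw [(show n + a - 1 + 1 = m by omega), (show n - 1 + 1 = n by omega)] at h3
    rw [← h1, ← h2, mul_comm]
    exact h3.symm
  apply Nat.eq_of_mul_eq_mul_left (show 0 < m by omega)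
  calc m * (n * T) = n * (T * m) := by ring
    _ = n * (m.choose a * (n - 2).choose (a - 1)) := by rw [hmain]
    _ = (n * m.choose a) * (n - 2).choose (a - 1) := by ring
    _ = (m * (n + a - 1).choose a) * (n - 2).choose (a - 1) := by rw [hchoose]
    _ = m * ((n + a - 1).choose a * (n - 2).choose (a - 1)) := by ring
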